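/- Suppose the conditional law of the state is constant: p_t = p ∈ ΔΩ for all t (for instance, the states X_t are i.i.d. with law p independent of the predictable forecasts f_t). Let ε ≥ 0 and suppose the play is almost surely ε-calibrated: limsup_{T→∞} Σ_{f ∈ F} (|N_T[f]|/T) ‖ω̄_T[f] − f‖ ≤ ε almost surely. Then, almost surely, for every forecast f ∈ F, limsup_{T→∞} (|N_T[f]|/T) · ‖f − p‖ ≤ ε; in particular, every forecast at Euclidean distance more than ε from p is used with asymptotic frequency zero. -/

import Mathlib

open Filter MeasureTheory

noncomputable section

variable {Ω : Type*} [Fintype Ω] [DecidableEq Ω]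

/-- The Dirac point mass `δ_ω` as an element of the probability simplex in `ℝ^Ω`. -/
def diracVec (ω : Ω) : EuclideanSpace ℝ Ω := WithLp.toLp 2 fun a => if a = ω then 1 else 0

set_option linter.unusedSectionVars false

private lemma aux_sum_apply {ι : Type*} (s : Finset ι) (v : ι → EuclideanSpace ℝ Ω) (a : Ω) :
    (∑ t ∈ s, v t) a = ∑ t ∈ s, v t a := by
  classical
  induction s using Finset.induction with
  | empty => rfl
  | insert _ _ h ih => rw [Finset.sum_insert h, Finset.sum_insert h, PiLp.add_apply, ih]

private lemma aux_norm_le_sum (v : EuclideanSpace ℝ Ω) : ‖v‖ ≤ ∑ a, |v a| := by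
  rw [EuclideanSpace.norm_eq]
  calc Real.sqrt (∑ a, ‖v a‖ ^ 2) ≤ Real.sqrt ((∑ a, ‖v a‖) ^ 2) :=
        Real.sqrt_le_sqrt (Finset.sum_sq_le_sq_sum_of_nonneg fun i _ => norm_nonneg _)
    _ = ∑ a, ‖v a‖ := Real.sqrt_sq (Finset.sum_nonneg fun i _ => norm_nonneg _)
    _ = ∑ a, |v a| := by simp [Real.norm_eq_abs]

private lemma aux_norm_dirac (ω : Ω) : ‖(diracVec ω : EuclideanSpace ℝ Ω)‖ = 1 := by
  rw [EuclideanSpace.norm_eq]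
  have h : ∀ a, ‖(diracVec ω : EuclideanSpace ℝ Ω) a‖ ^ 2 = if a = ω then 1 else 0 := by
    intro a
    simp only [diracVec, PiLp.toLp_apply]
    split_ifs <;> simp
  rw [Finset.sum_congr rfl fun a _ => h a]
  simp

private lemma aux_det (Y : ℕ → ℝ) (hbdd : ∀ t, |Y t| ≤ 1)
    (H : ∀ m : ℕ, ∀ᶠ k in atTop,
      |∑ t ∈ Finset.range ((k + 1) ^ 2), Y t| ≤ ((m : ℝ) + 1)⁻¹ * ((k : ℝ) + 1) ^ 2) :
    Tendsto (fun n : ℕ => (∑ t ∈ Finset.range n, Y t) / n) atTop (nhds 0) := by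
  rw [Metric.tendsto_atTop]
  intro ε hε
  obtain ⟨m, hm⟩ := exists_nat_gt (2 / ε)
  set δ : ℝ := ((m : ℝ) + 1)⁻¹ with hδdef
  have hδ : 0 < δ := by positivity
  have hδm : ((m : ℝ) + 1) * δ = 1 := mul_inv_cancel₀ (by positivity)
  have hδε : 2 * δ < ε := by
    have h1 : 2 < ε * ((m : ℝ) + 1) := by
      rw [div_lt_iff₀ hε] at hm
      nlinarith [hε]
    nlinarith [hδ, hδm]
  obtain ⟨K₀, hK₀⟩ := eventually_atTop.1 (H m)
  set M := max (K₀ + 1) (3 * (m + 1)) with hMdef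
  refine ⟨M ^ 2, fun n hn => ?_⟩
  have hk2n : Nat.sqrt n ^ 2 ≤ n := Nat.sqrt_le' n
  have hnk : n < (Nat.sqrt n + 1) ^ 2 := Nat.lt_succ_sqrt' n
  have hMk : M ≤ Nat.sqrt n := by
    have h := Nat.sqrt_le_sqrt hn
    rwa [Nat.sqrt_eq'] at h
  obtain ⟨j, hj⟩ : ∃ j, Nat.sqrt n = j + 1 := ⟨Nat.sqrt n - 1, by omega⟩
  rw [hj] at hk2n hnk hMk
  have hjK : K₀ ≤ j := by
    have : K₀ + 1 ≤ j + 1 := le_trans (le_max_left _ _) hMk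
    omega
  have hSsq := hK₀ j hjK
  have hdiff : |(∑ t ∈ Finset.range n, Y t) - ∑ t ∈ Finset.range ((j + 1) ^ 2), Y t|
      ≤ (n : ℝ) - (((j + 1) ^ 2 : ℕ) : ℝ) := by
    rw [← Finset.sum_Ico_eq_sub _ hk2n]
    calc |∑ t ∈ Finset.Ico ((j + 1) ^ 2) n, Y t|
        ≤ ∑ t ∈ Finset.Ico ((j + 1) ^ 2) n, |Y t| := Finset.abs_sum_le_sum_abs _ _
      _ ≤ ∑ _t ∈ Finset.Ico ((j + 1) ^ 2) n, (1 : ℝ) := Finset.sum_le_sum fun t _ => hbdd t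
      _ = ((n - (j + 1) ^ 2 : ℕ) : ℝ) := by simp [Nat.card_Ico]
      _ = (n : ℝ) - (((j + 1) ^ 2 : ℕ) : ℝ) := by rw [Nat.cast_sub hk2n]
  have hcast : (((j + 1) ^ 2 : ℕ) : ℝ) = ((j : ℝ) + 1) ^ 2 := by push_cast; ring
  have hkn : ((j : ℝ) + 1) ^ 2 ≤ (n : ℝ) := by rw [← hcast]; exact_mod_cast hk2n
  have hn2k : (n : ℝ) ≤ ((j : ℝ) + 1) ^ 2 + 2 * ((j : ℝ) + 1) := by
    have h2 : n < (j + 1) ^ 2 + 2 * (j + 1) + 1 := by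
      have h3 : (j + 1 + 1) ^ 2 = (j + 1) ^ 2 + 2 * (j + 1) + 1 := by ring
      omega
    have h4 : n ≤ (j + 1) ^ 2 + 2 * (j + 1) := by omega
    have h5 : (n : ℝ) ≤ (((j + 1) ^ 2 + 2 * (j + 1) : ℕ) : ℝ) := by exact_mod_cast h4
    push_cast at h5
    linarith
  have hk3 : 3 * ((m : ℝ) + 1) ≤ (j : ℝ) + 1 := by
    have h6 : 3 * (m + 1) ≤ j + 1 := le_trans (le_max_right _ _) hMk
    exact_mod_cast h6
  have hk1 : (1 : ℝ) ≤ (j : ℝ) + 1 := by have := Nat.cast_nonneg (α := ℝ) j; linarith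
  have hnpos : (0 : ℝ) < n := by
    have : 0 < n := lt_of_lt_of_le (pow_pos (Nat.succ_pos j) 2) hk2n
    exact_mod_cast this
  have hA : |∑ t ∈ Finset.range ((j + 1) ^ 2), Y t| ≤ δ * ((j : ℝ) + 1) ^ 2 := hSsq
  have hR : |∑ t ∈ Finset.range n, Y t|
      ≤ δ * ((j : ℝ) + 1) ^ 2 + ((n : ℝ) - ((j : ℝ) + 1) ^ 2) := by
    have h := abs_sub_abs_le_abs_sub (∑ t ∈ Finset.range n, Y t)
      (∑ t ∈ Finset.range ((j + 1) ^ 2), Y t)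
    rw [hcast] at hdiff
    linarith [hdiff, hA, h]
  have e2 : 3 * ((j : ℝ) + 1) ≤ δ * ((j : ℝ) + 1) ^ 2 := by
    have e2a : 3 * ((m : ℝ) + 1) * ((j : ℝ) + 1) ≤ ((j : ℝ) + 1) * ((j : ℝ) + 1) :=
      mul_le_mul_of_nonneg_right hk3 (by positivity)
    have e2b : δ * (3 * ((m : ℝ) + 1) * ((j : ℝ) + 1)) ≤ δ * (((j : ℝ) + 1) * ((j : ℝ) + 1)) :=
      mul_le_mul_of_nonneg_left e2a hδ.le
    have e2c : δ * (3 * ((m : ℝ) + 1) * ((j : ℝ) + 1)) = 3 * ((j : ℝ) + 1) := by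
      linear_combination (3 * ((j : ℝ) + 1)) * hδm
    have e2d : δ * (((j : ℝ) + 1) * ((j : ℝ) + 1)) = δ * ((j : ℝ) + 1) ^ 2 := by ring
    linarith [e2b, e2c, e2d]
  have hδn : δ * ((j : ℝ) + 1) ^ 2 ≤ δ * (n : ℝ) := mul_le_mul_of_nonneg_left hkn hδ.le
  have hkey : |∑ t ∈ Finset.range n, Y t| ≤ 2 * δ * (n : ℝ) := by linarith
  rw [Real.dist_eq, sub_zero, abs_div, abs_of_nonneg (le_of_lt hnpos)]
  rw [div_lt_iff₀ hnpos]
  calc |∑ t ∈ Finset.range n, Y t| ≤ 2 * δ * n := hkey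
    _ < ε * n := by have := mul_lt_mul_of_pos_right hδε hnpos; linarith

private lemma aux_integrable {Ξ : Type*} {m0 : MeasurableSpace Ξ} {ℙ : Measure Ξ}
    [IsProbabilityMeasure ℙ] {g : Ξ → ℝ} (hg : Measurable g) {C : ℝ}
    (hb : ∀ ξ, |g ξ| ≤ C) : Integrable g ℙ :=
  (integrable_const C).mono' hg.aestronglyMeasurable
    (Eventually.of_forall fun ξ => by simpa [Real.norm_eq_abs] using hb ξ)

private lemma aux_slln {Ξ : Type*} {m0 : MeasurableSpace Ξ} (ℙ : Measure Ξ)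
    [IsProbabilityMeasure ℙ] (𝒢 : Filtration ℕ m0) (Y : ℕ → Ξ → ℝ)
    (hmeas : ∀ t, Measurable[𝒢 (t + 1)] (Y t))
    (hbdd : ∀ t ξ, |Y t ξ| ≤ 1)
    (hc : ∀ t, ℙ[Y t | 𝒢 t] =ᵐ[ℙ] 0) :
    ∀ᵐ ξ ∂ℙ, Tendsto (fun n : ℕ => (∑ t ∈ Finset.range n, Y t ξ) / n) atTop (nhds 0) := by
  have hYm : ∀ t, Measurable (Y t) := fun t => (hmeas t).mono (𝒢.le _) le_rfl
  have hYint : ∀ t, Integrable (Y t) ℙ := fun t => aux_integrable (hYm t) (hbdd t)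
  set S : ℕ → Ξ → ℝ := fun n ξ => ∑ t ∈ Finset.range n, Y t ξ with hSdef
  have hSm : ∀ n, Measurable (S n) := fun n =>
    Finset.measurable_sum _ fun t _ => hYm t
  have hSb : ∀ n ξ, |S n ξ| ≤ n := by
    intro n ξ
    calc |S n ξ| ≤ ∑ t ∈ Finset.range n, |Y t ξ| := Finset.abs_sum_le_sum_abs _ _
      _ ≤ ∑ _t ∈ Finset.range n, (1 : ℝ) := Finset.sum_le_sum fun t _ => hbdd t ξ
      _ = n := by simp
  have hSint : ∀ n, Integrable (S n) ℙ := fun n => aux_integrable (hSm n) (hSb n)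
  have hSYb : ∀ n ξ, |S n ξ * Y n ξ| ≤ n := by
    intro n ξ
    rw [abs_mul]
    calc |S n ξ| * |Y n ξ| ≤ (n : ℝ) * 1 :=
      mul_le_mul (hSb n ξ) (hbdd n ξ) (abs_nonneg _) (Nat.cast_nonneg n)
      _ = n := mul_one _
  have hSYint : ∀ n, Integrable (fun ξ => S n ξ * Y n ξ) ℙ := fun n =>
    aux_integrable ((hSm n).mul (hYm n)) (hSYb n)
  -- the cross term vanishes
  have hcross : ∀ n, ∫ ξ, S n ξ * Y n ξ ∂ℙ = 0 := by
    intro n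
    have hSM : StronglyMeasurable[𝒢 n] (S n) := by
      apply Measurable.stronglyMeasurable
      exact Finset.measurable_sum _ fun t ht =>
        (hmeas t).mono (𝒢.mono (Nat.succ_le_of_lt (Finset.mem_range.1 ht))) le_rfl
    have h1 : ℙ[S n * Y n | 𝒢 n] =ᵐ[ℙ] S n * ℙ[Y n | 𝒢 n] :=
      condExp_mul_of_stronglyMeasurable_left hSM (hSYint n) (hYint n)
    have h2 : S n * ℙ[Y n | 𝒢 n] =ᵐ[ℙ] 0 := by
      filter_upwards [hc n] with ξ hξ
      simp [Pi.mul_apply, hξ]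
    calc ∫ ξ, S n ξ * Y n ξ ∂ℙ = ∫ ξ, (ℙ[S n * Y n | 𝒢 n]) ξ ∂ℙ :=
          (integral_condExp (𝒢.le n)).symm
      _ = ∫ ξ, (0 : Ξ → ℝ) ξ ∂ℙ := integral_congr_ae (h1.trans h2)
      _ = 0 := by simp
  -- variance bound
  have hvar : ∀ n, ∫ ξ, (S n ξ) ^ 2 ∂ℙ ≤ n := by
    intro n
    induction n with
    | zero => simp [hSdef]
    | succ n ih =>
      have hexp : ∀ ξ, (S (n + 1) ξ) ^ 2 =
          (S n ξ) ^ 2 + (2 * (S n ξ * Y n ξ) + (Y n ξ) ^ 2) := by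
        intro ξ
        have : S (n + 1) ξ = S n ξ + Y n ξ := Finset.sum_range_succ _ _
        rw [this]; ring
      have hS2int : ∀ k : ℕ, Integrable (fun ξ => (S k ξ) ^ 2) ℙ := fun k =>
        aux_integrable ((hSm k).pow measurable_const)
          (C := (k : ℝ) ^ 2) fun ξ => by
            rw [abs_pow]
            exact pow_le_pow_left₀ (abs_nonneg _) (hSb k ξ) 2
      have hY2int : Integrable (fun ξ => (Y n ξ) ^ 2) ℙ :=
        aux_integrable ((hYm n).pow measurable_const) (C := 1) fun ξ => by
          rw [abs_pow]
          simpa using pow_le_pow_left₀ (abs_nonneg _) (hbdd n ξ) 2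
      have hint2 : Integrable (fun ξ => 2 * (S n ξ * Y n ξ) + (Y n ξ) ^ 2) ℙ :=
        ((hSYint n).const_mul 2).add hY2int
      have hsplit : ∫ ξ, (S (n + 1) ξ) ^ 2 ∂ℙ =
          ∫ ξ, (S n ξ) ^ 2 ∂ℙ + ∫ ξ, (2 * (S n ξ * Y n ξ) + (Y n ξ) ^ 2) ∂ℙ := by
        rw [← integral_add (hS2int n) hint2]
        exact integral_congr_ae (Eventually.of_forall fun ξ => hexp ξ)
      have hsplit2 : ∫ ξ, (2 * (S n ξ * Y n ξ) + (Y n ξ) ^ 2) ∂ℙ =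
          2 * ∫ ξ, S n ξ * Y n ξ ∂ℙ + ∫ ξ, (Y n ξ) ^ 2 ∂ℙ := by
        rw [integral_add ((hSYint n).const_mul 2) hY2int, integral_const_mul]
      have hY2le : ∫ ξ, (Y n ξ) ^ 2 ∂ℙ ≤ 1 := by
        calc ∫ ξ, (Y n ξ) ^ 2 ∂ℙ ≤ ∫ _ξ, (1 : ℝ) ∂ℙ := by
              apply integral_mono hY2int (integrable_const 1)
              intro ξ
              show Y n ξ ^ 2 ≤ 1
              rw [← sq_abs]
              simpa using pow_le_pow_left₀ (abs_nonneg _) (hbdd n ξ) 2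
          _ = 1 := by simp
      rw [hsplit, hsplit2, hcross n]
      push_cast
      linarith [ih, hY2le]
  -- Chebyshev + Borel-Cantelli
  have hBC : ∀ m : ℕ, ∀ᵐ ξ ∂ℙ, ∀ᶠ k : ℕ in atTop,
      ¬ ((((m : ℝ) + 1)⁻¹ * ((k : ℝ) + 1) ^ 2) ^ 2 ≤ (S ((k + 1) ^ 2) ξ) ^ 2) := by
    intro m
    set δ : ℝ := ((m : ℝ) + 1)⁻¹ with hδdef
    have hδ : 0 < δ := by positivity
    set s : ℕ → Set Ξ := fun k => {ξ | (δ * ((k : ℝ) + 1) ^ 2) ^ 2 ≤ (S ((k + 1) ^ 2) ξ) ^ 2}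
      with hsdef
    have hms : ∀ k, ℙ (s k) ≤ ENNReal.ofReal (δ⁻¹ ^ 2 * (1 / ((k : ℝ) + 1) ^ 2)) := by
      intro k
      have hck : (0 : ℝ) < ((k : ℝ) + 1) ^ 2 := by positivity
      have hA : (0 : ℝ) < (δ * ((k : ℝ) + 1) ^ 2) ^ 2 := by positivity
      have hmark := mul_meas_ge_le_integral_of_nonneg
        (μ := ℙ) (f := fun ξ => (S ((k + 1) ^ 2) ξ) ^ 2)
        (Eventually.of_forall fun ξ => sq_nonneg _)
        (aux_integrable ((hSm _).pow measurable_const)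
          (C := (((k + 1) ^ 2 : ℕ) : ℝ) ^ 2) fun ξ => by
            rw [abs_pow]
            exact pow_le_pow_left₀ (abs_nonneg _) (hSb _ ξ) 2)
        ((δ * ((k : ℝ) + 1) ^ 2) ^ 2)
      have hvk : ∫ ξ, (S ((k + 1) ^ 2) ξ) ^ 2 ∂ℙ ≤ ((k : ℝ) + 1) ^ 2 := by
        have := hvar ((k + 1) ^ 2)
        have hc2 : (((k + 1) ^ 2 : ℕ) : ℝ) = ((k : ℝ) + 1) ^ 2 := by push_cast; ring
        linarith [this, hc2.le, hc2.ge]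
      have htoReal : (ℙ (s k)).toReal ≤ δ⁻¹ ^ 2 * (1 / ((k : ℝ) + 1) ^ 2) := by
        have h7 : (δ * ((k : ℝ) + 1) ^ 2) ^ 2 * (ℙ (s k)).toReal ≤ ((k : ℝ) + 1) ^ 2 :=
          le_trans hmark hvk
        rw [← le_div_iff₀' hA] at h7
        calc (ℙ (s k)).toReal ≤ ((k : ℝ) + 1) ^ 2 / (δ * ((k : ℝ) + 1) ^ 2) ^ 2 := h7
          _ = δ⁻¹ ^ 2 * (1 / ((k : ℝ) + 1) ^ 2) := by
            field_simp
      exact (ENNReal.le_ofReal_iff_toReal_le (measure_ne_top ℙ _)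
        (by positivity)).2 htoReal
    have hsum : Summable (fun k : ℕ => δ⁻¹ ^ 2 * (1 / ((k : ℝ) + 1) ^ 2)) := by
      apply Summable.mul_left
      have h8 : Summable (fun n : ℕ => 1 / (n : ℝ) ^ 2) :=
        Real.summable_one_div_nat_pow.2 one_lt_two
      have h9 := (summable_nat_add_iff 1).2 h8
      apply h9.congr
      intro k
      push_cast
      ring
    have htsum : (∑' k, ℙ (s k)) ≠ ⊤ := by
      apply ne_top_of_le_ne_top _ (ENNReal.tsum_le_tsum hms)
      rw [← ENNReal.ofReal_tsum_of_nonneg (fun k => by positivity) hsum]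
      exact ENNReal.ofReal_ne_top
    filter_upwards [ae_eventually_notMem htsum] with ξ hξ
    simpa [hsdef] using hξ
  have hBCall : ∀ᵐ ξ ∂ℙ, ∀ m : ℕ, ∀ᶠ k : ℕ in atTop,
      ¬ ((((m : ℝ) + 1)⁻¹ * ((k : ℝ) + 1) ^ 2) ^ 2 ≤ (S ((k + 1) ^ 2) ξ) ^ 2) :=
    ae_all_iff.2 hBC
  filter_upwards [hBCall] with ξ hξ
  apply aux_det (fun t => Y t ξ) (fun t => hbdd t ξ)
  intro m
  filter_upwards [hξ m] with k hk
  have h10 : (S ((k + 1) ^ 2) ξ) ^ 2 < (((m : ℝ) + 1)⁻¹ * ((k : ℝ) + 1) ^ 2) ^ 2 :=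
    not_le.1 hk
  have h11 : (0 : ℝ) ≤ ((m : ℝ) + 1)⁻¹ * ((k : ℝ) + 1) ^ 2 := by positivity
  nlinarith [abs_nonneg (S ((k + 1) ^ 2) ξ), sq_abs (S ((k + 1) ^ 2) ξ)]


open Classical in
private lemma aux_avg_norm (x : ℕ → Ω) (s : Finset ℕ) :
    ‖((s.card : ℝ))⁻¹ • ∑ t ∈ s, (diracVec (x t) : EuclideanSpace ℝ Ω)‖ ≤ 1 := by
  rcases Nat.eq_zero_or_pos s.card with h | h
  · rw [Finset.card_eq_zero] at h
    subst h
    simp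
  · have hn : (0 : ℝ) < (s.card : ℝ) := by exact_mod_cast h
    rw [norm_smul, Real.norm_eq_abs, abs_of_nonneg (inv_nonneg.2 hn.le)]
    have h2 : ‖∑ t ∈ s, (diracVec (x t) : EuclideanSpace ℝ Ω)‖ ≤ (s.card : ℝ) := by
      calc ‖∑ t ∈ s, (diracVec (x t) : EuclideanSpace ℝ Ω)‖
          ≤ ∑ t ∈ s, ‖(diracVec (x t) : EuclideanSpace ℝ Ω)‖ := norm_sum_le _ _
        _ = (s.card : ℝ) := by simp [aux_norm_dirac]
    calc ((s.card : ℝ))⁻¹ * ‖∑ t ∈ s, (diracVec (x t) : EuclideanSpace ℝ Ω)‖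
        ≤ ((s.card : ℝ))⁻¹ * (s.card : ℝ) := by
          exact mul_le_mul_of_nonneg_left h2 (inv_nonneg.2 hn.le)
      _ = 1 := inv_mul_cancel₀ hn.ne'

open Classical in
private lemma aux_term_bd (q' : EuclideanSpace ℝ Ω) (x : ℕ → Ω) (s : Finset ℕ) (T : ℕ)
    (hsT : s ⊆ Finset.range T) :
    ((s.card : ℝ) / T) * ‖((s.card : ℝ)⁻¹ • ∑ t ∈ s, diracVec (x t)) - q'‖ ≤ 1 + ‖q'‖ := by
  have h1 : (s.card : ℝ) / T ≤ 1 := by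
    rcases Nat.eq_zero_or_pos T with hT | hT
    · subst hT
      have : s = ∅ := Finset.subset_empty.1 (by simpa using hsT)
      subst this
      simp
    · have hT' : (0 : ℝ) < T := by exact_mod_cast hT
      rw [div_le_one hT']
      exact_mod_cast le_trans (Finset.card_le_card hsT) (le_of_eq (Finset.card_range T))
  have h2 : ‖((s.card : ℝ)⁻¹ • ∑ t ∈ s, (diracVec (x t) : EuclideanSpace ℝ Ω)) - q'‖
      ≤ 1 + ‖q'‖ := by
    calc ‖((s.card : ℝ)⁻¹ • ∑ t ∈ s, (diracVec (x t) : EuclideanSpace ℝ Ω)) - q'‖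
        ≤ ‖(s.card : ℝ)⁻¹ • ∑ t ∈ s, (diracVec (x t) : EuclideanSpace ℝ Ω)‖ + ‖q'‖ :=
          norm_sub_le _ _
      _ ≤ 1 + ‖q'‖ := by linarith [aux_avg_norm x s]
  calc ((s.card : ℝ) / T) * ‖((s.card : ℝ)⁻¹ • ∑ t ∈ s, diracVec (x t)) - q'‖
      ≤ 1 * (1 + ‖q'‖) := mul_le_mul h1 h2 (norm_nonneg _)
        zero_le_one
    _ = 1 + ‖q'‖ := one_mul _

open Classical in
private lemma aux_pt (p q : EuclideanSpace ℝ Ω) (x : ℕ → Ω) (s : Finset ℕ) (T : ℕ)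
    (hsT : s ⊆ Finset.range T) :
    ((s.card : ℝ) / T) * ‖q - p‖
      ≤ ((s.card : ℝ) / T) * ‖((s.card : ℝ)⁻¹ • ∑ t ∈ s, diracVec (x t)) - q‖ +
        ‖(T : ℝ)⁻¹ • ∑ t ∈ s, ((diracVec (x t) : EuclideanSpace ℝ Ω) - p)‖ := by
  rcases Nat.eq_zero_or_pos s.card with h | h
  · rw [h]
    simp only [Nat.cast_zero, zero_div, zero_mul]
    positivity
  · have hn : (0 : ℝ) < (s.card : ℝ) := by exact_mod_cast h
    have hT : (0 : ℝ) < (T : ℝ) := by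
      have h1 : s.card ≤ T := le_trans (Finset.card_le_card hsT) (le_of_eq (Finset.card_range T))
      have : 0 < T := lt_of_lt_of_le h h1
      exact_mod_cast this
    have hc : (0 : ℝ) ≤ (s.card : ℝ) / T := div_nonneg hn.le hT.le
    have hωp : ((s.card : ℝ)⁻¹ • ∑ t ∈ s, (diracVec (x t) : EuclideanSpace ℝ Ω)) - p
        = (s.card : ℝ)⁻¹ • ∑ t ∈ s, ((diracVec (x t) : EuclideanSpace ℝ Ω) - p) := by
      rw [Finset.sum_sub_distrib, smul_sub]
      congr 1
      rw [Finset.sum_const, ← Nat.cast_smul_eq_nsmul ℝ, inv_smul_smul₀ hn.ne']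
    have htri : ‖q - p‖
        ≤ ‖((s.card : ℝ)⁻¹ • ∑ t ∈ s, (diracVec (x t) : EuclideanSpace ℝ Ω)) - q‖ +
          ‖((s.card : ℝ)⁻¹ • ∑ t ∈ s, (diracVec (x t) : EuclideanSpace ℝ Ω)) - p‖ := by
      calc ‖q - p‖ = ‖(q - ((s.card : ℝ)⁻¹ • ∑ t ∈ s, (diracVec (x t) : EuclideanSpace ℝ Ω))) +
            (((s.card : ℝ)⁻¹ • ∑ t ∈ s, (diracVec (x t) : EuclideanSpace ℝ Ω)) - p)‖ := by
              congr 1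
              abel
        _ ≤ ‖q - ((s.card : ℝ)⁻¹ • ∑ t ∈ s, (diracVec (x t) : EuclideanSpace ℝ Ω))‖ +
            ‖((s.card : ℝ)⁻¹ • ∑ t ∈ s, (diracVec (x t) : EuclideanSpace ℝ Ω)) - p‖ :=
              norm_add_le _ _
        _ = ‖((s.card : ℝ)⁻¹ • ∑ t ∈ s, (diracVec (x t) : EuclideanSpace ℝ Ω)) - q‖ +
            ‖((s.card : ℝ)⁻¹ • ∑ t ∈ s, (diracVec (x t) : EuclideanSpace ℝ Ω)) - p‖ := by
              rw [norm_sub_rev]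
    have heq : ((s.card : ℝ) / T) *
        ‖((s.card : ℝ)⁻¹ • ∑ t ∈ s, (diracVec (x t) : EuclideanSpace ℝ Ω)) - p‖
        = ‖(T : ℝ)⁻¹ • ∑ t ∈ s, ((diracVec (x t) : EuclideanSpace ℝ Ω) - p)‖ := by
      rw [hωp, norm_smul, norm_smul, Real.norm_eq_abs, Real.norm_eq_abs,
        abs_of_nonneg (inv_nonneg.2 hn.le), abs_of_nonneg (inv_nonneg.2 hT.le)]
      field_simp
    have hmul := mul_le_mul_of_nonneg_left htri hc
    rw [mul_add, heq] at hmul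
    exact hmul


open Classical in
/-- If the conditional law of the state is the constant `p` at every period and the play is
almost surely `ε`-calibrated, then almost surely every forecast `f ∈ F` satisfies
`limsup_T (|N_T[f]|/T) ‖f − p‖ ≤ ε`; in particular, every forecast at distance more than `ε`
from `p` is used with asymptotic frequency zero. -/
theorem iid_forces_forecast_near_p
    {Ξ : Type*} {m0 : MeasurableSpace Ξ} (ℙ : Measure Ξ) [IsProbabilityMeasure ℙ]
    (𝒢 : Filtration ℕ m0) (h0 : 𝒢 0 = ⊥)
    [MeasurableSpace Ω] [MeasurableSingletonClass Ω]
    (X : ℕ → Ξ → Ω) (hX : ∀ t, Measurable[𝒢 (t + 1)] (X t))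
    (p : EuclideanSpace ℝ Ω) (hp0 : ∀ a, 0 ≤ p a) (hp1 : ∑ a, p a = 1)
    (hcond : ∀ t a,
      (ℙ[(fun ξ => if X t ξ = a then (1 : ℝ) else 0) | 𝒢 t]) =ᵐ[ℙ] fun _ => p a)
    (F : Finset (EuclideanSpace ℝ Ω))
    (f : ℕ → Ξ → EuclideanSpace ℝ Ω) (hfF : ∀ t ξ, f t ξ ∈ F)
    (hf : ∀ t, Measurable[𝒢 t] (f t))
    (ε : ℝ) (hε : 0 ≤ ε)
    (hcal : ∀ᵐ ξ ∂ℙ,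
      limsup (fun T : ℕ => ∑ q ∈ F,
        ((((Finset.range T).filter fun t => f t ξ = q).card : ℝ) / T) *
          ‖((((Finset.range T).filter fun t => f t ξ = q).card : ℝ)⁻¹ •
              ∑ t ∈ (Finset.range T).filter fun t => f t ξ = q, diracVec (X t ξ)) - q‖)
        atTop ≤ ε) :
    ∀ᵐ ξ ∂ℙ, ∀ q ∈ F,
      limsup (fun T : ℕ =>
          ((((Finset.range T).filter fun t => f t ξ = q).card : ℝ) / T) * ‖q - p‖)
        atTop ≤ ε := by
  have pa1 : ∀ a, p a ≤ 1 := fun a =>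
    hp1 ▸ Finset.single_le_sum (fun i _ => hp0 i) (Finset.mem_univ a)
  -- strong law for each forecast value q and coordinate a
  have hslln : ∀ q ∈ F, ∀ a : Ω, ∀ᵐ ξ ∂ℙ,
      Tendsto (fun n : ℕ => (∑ t ∈ Finset.range n,
        (if f t ξ = q then (1 : ℝ) else 0) * ((if X t ξ = a then (1 : ℝ) else 0) - p a)) / n)
        atTop (nhds 0) := by
    intro q hq a
    have hg1m : ∀ t, Measurable[𝒢 t] (fun ξ => if f t ξ = q then (1 : ℝ) else 0) := by
      intro t
      exact Measurable.ite (hf t (measurableSet_singleton q)) measurable_const measurable_const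
    have hg2m : ∀ t, Measurable[𝒢 (t + 1)]
        (fun ξ => (if X t ξ = a then (1 : ℝ) else 0) - p a) := by
      intro t
      exact (Measurable.ite (hX t (measurableSet_singleton a)) measurable_const
        measurable_const).sub measurable_const
    have hg2b : ∀ t ξ, |(if X t ξ = a then (1 : ℝ) else 0) - p a| ≤ 1 := by
      intro t ξ
      have h1 := hp0 a
      have h2 := pa1 a
      split_ifs <;> rw [abs_le] <;> constructor <;> linarith
    have hYmeas : ∀ t, Measurable[𝒢 (t + 1)] (fun ξ =>
        (if f t ξ = q then (1 : ℝ) else 0) * ((if X t ξ = a then (1 : ℝ) else 0) - p a)) :=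
      fun t => ((hg1m t).mono (𝒢.mono (Nat.le_succ t)) le_rfl).mul (hg2m t)
    have hYb : ∀ t ξ, |(if f t ξ = q then (1 : ℝ) else 0) *
        ((if X t ξ = a then (1 : ℝ) else 0) - p a)| ≤ 1 := by
      intro t ξ
      rw [abs_mul]
      have h1 : |if f t ξ = q then (1 : ℝ) else 0| ≤ 1 := by split_ifs <;> simp
      calc |if f t ξ = q then (1 : ℝ) else 0| * |(if X t ξ = a then (1 : ℝ) else 0) - p a|
          ≤ 1 * 1 := mul_le_mul h1 (hg2b t ξ) (abs_nonneg _) zero_le_one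
        _ = 1 := mul_one 1
    have hcz : ∀ t, ℙ[(fun ξ =>
        (if f t ξ = q then (1 : ℝ) else 0) * ((if X t ξ = a then (1 : ℝ) else 0) - p a)) |
          𝒢 t] =ᵐ[ℙ] 0 := by
      intro t
      have hg2int : Integrable (fun ξ => (if X t ξ = a then (1 : ℝ) else 0) - p a) ℙ :=
        aux_integrable ((hg2m t).mono (𝒢.le _) le_rfl) (hg2b t)
      have hindint : Integrable (fun ξ => (if X t ξ = a then (1 : ℝ) else 0)) ℙ :=
        aux_integrable (Measurable.ite (((hX t).mono (𝒢.le _) le_rfl)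
            (measurableSet_singleton a)) measurable_const measurable_const)
          (C := 1) (fun ξ => by split_ifs <;> simp)
      have hYint : Integrable (fun ξ =>
          (if f t ξ = q then (1 : ℝ) else 0) * ((if X t ξ = a then (1 : ℝ) else 0) - p a)) ℙ :=
        aux_integrable ((hYmeas t).mono (𝒢.le _) le_rfl) (hYb t)
      have h1 : ℙ[(fun ξ => if f t ξ = q then (1 : ℝ) else 0) *
            (fun ξ => (if X t ξ = a then (1 : ℝ) else 0) - p a) | 𝒢 t] =ᵐ[ℙ]
          (fun ξ => if f t ξ = q then (1 : ℝ) else 0) *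
            ℙ[(fun ξ => (if X t ξ = a then (1 : ℝ) else 0) - p a) | 𝒢 t] :=
        condExp_mul_of_stronglyMeasurable_left ((hg1m t).stronglyMeasurable) hYint hg2int
      have h2 : ℙ[(fun ξ => (if X t ξ = a then (1 : ℝ) else 0) - p a) | 𝒢 t] =ᵐ[ℙ] 0 := by
        have hs := condExp_sub (μ := ℙ) (m := 𝒢 t) hindint (integrable_const (p a))
        have hcc : ℙ[(fun _ : Ξ => p a) | 𝒢 t] = fun _ => p a := condExp_const (𝒢.le t) _
        filter_upwards [hs, hcond t a] with ξ hξ1 hξ2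
        have : (ℙ[(fun _ : Ξ => p a) | 𝒢 t]) ξ = p a := by rw [hcc]
        rw [Pi.zero_apply]
        calc (ℙ[(fun ξ => (if X t ξ = a then (1 : ℝ) else 0) - p a) | 𝒢 t]) ξ
            = (ℙ[(fun ξ => (if X t ξ = a then (1 : ℝ) else 0)) | 𝒢 t]) ξ -
              (ℙ[(fun _ : Ξ => p a) | 𝒢 t]) ξ := hξ1
          _ = p a - p a := by rw [hξ2, this]
          _ = 0 := sub_self _
      filter_upwards [h1, h2] with ξ hξ1 hξ2
      have hz : (ℙ[(fun ξ => (if X t ξ = a then (1 : ℝ) else 0) - p a) | 𝒢 t]) ξ = 0 := hξ2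
      have hh : (ℙ[(fun ξ => (if f t ξ = q then (1 : ℝ) else 0) *
            ((if X t ξ = a then (1 : ℝ) else 0) - p a)) | 𝒢 t]) ξ
          = (if f t ξ = q then (1 : ℝ) else 0) *
            (ℙ[(fun ξ => (if X t ξ = a then (1 : ℝ) else 0) - p a) | 𝒢 t]) ξ := hξ1
      rw [Pi.zero_apply, hh, hz, mul_zero]
    exact aux_slln ℙ 𝒢 _ hYmeas hYb hcz
  have hall : ∀ᵐ ξ ∂ℙ, ∀ (q : F) (a : Ω),
      Tendsto (fun n : ℕ => (∑ t ∈ Finset.range n,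
        (if f t ξ = (q : EuclideanSpace ℝ Ω) then (1 : ℝ) else 0) *
          ((if X t ξ = a then (1 : ℝ) else 0) - p a)) / n) atTop (nhds 0) :=
    ae_all_iff.2 fun q => ae_all_iff.2 fun a => hslln q q.2 a
  filter_upwards [hcal, hall] with ξ hcalξ hallξ
  intro q hq
  have hg0 : Tendsto (fun T : ℕ => ‖(T : ℝ)⁻¹ •
      ∑ t ∈ (Finset.range T).filter (fun t => f t ξ = q),
        ((diracVec (X t ξ) : EuclideanSpace ℝ Ω) - p)‖) atTop (nhds 0) := by
    have hb : ∀ T : ℕ, ‖(T : ℝ)⁻¹ •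
        ∑ t ∈ (Finset.range T).filter (fun t => f t ξ = q),
          ((diracVec (X t ξ) : EuclideanSpace ℝ Ω) - p)‖
        ≤ ∑ a : Ω, |(∑ t ∈ Finset.range T,
          (if f t ξ = q then (1 : ℝ) else 0) * ((if X t ξ = a then (1 : ℝ) else 0) - p a)) / T| := by
      intro T
      refine le_trans (aux_norm_le_sum _) (le_of_eq (Finset.sum_congr rfl fun a _ => ?_))
      congr 1
      rw [PiLp.smul_apply, aux_sum_apply, smul_eq_mul, Finset.sum_filter, div_eq_inv_mul]
      congr 1
      refine Finset.sum_congr rfl fun t _ => ?_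
      by_cases h : f t ξ = q
      · simp only [h, if_true, one_mul, PiLp.sub_apply]
        congr 1
        simp [diracVec, eq_comm]
      · simp [h]
    apply squeeze_zero (fun T => norm_nonneg _) hb
    have hco : ∀ a : Ω, Tendsto (fun T : ℕ => |(∑ t ∈ Finset.range T,
        (if f t ξ = q then (1 : ℝ) else 0) * ((if X t ξ = a then (1 : ℝ) else 0) - p a)) / T|)
        atTop (nhds 0) := fun a => by
      simpa using (hallξ ⟨q, hq⟩ a).abs
    simpa using tendsto_finset_sum Finset.univ (fun a (_ : a ∈ Finset.univ) => hco a)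
  -- pointwise inequality
  have hpt : ∀ T : ℕ,
      ((((Finset.range T).filter fun t => f t ξ = q).card : ℝ) / T) * ‖q - p‖
        ≤ (∑ q' ∈ F, ((((Finset.range T).filter fun t => f t ξ = q').card : ℝ) / T) *
            ‖((((Finset.range T).filter fun t => f t ξ = q').card : ℝ)⁻¹ •
                ∑ t ∈ (Finset.range T).filter fun t => f t ξ = q', diracVec (X t ξ)) - q'‖) +
          ‖(T : ℝ)⁻¹ • ∑ t ∈ (Finset.range T).filter (fun t => f t ξ = q),
            ((diracVec (X t ξ) : EuclideanSpace ℝ Ω) - p)‖ := by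
    intro T
    have ha := aux_pt p q (fun t => X t ξ) ((Finset.range T).filter fun t => f t ξ = q) T
      (Finset.filter_subset _ _)
    have hsingle : ((((Finset.range T).filter fun t => f t ξ = q).card : ℝ) / T) *
        ‖((((Finset.range T).filter fun t => f t ξ = q).card : ℝ)⁻¹ •
            ∑ t ∈ (Finset.range T).filter fun t => f t ξ = q, diracVec (X t ξ)) - q‖
        ≤ ∑ q' ∈ F, ((((Finset.range T).filter fun t => f t ξ = q').card : ℝ) / T) *
            ‖((((Finset.range T).filter fun t => f t ξ = q').card : ℝ)⁻¹ •
                ∑ t ∈ (Finset.range T).filter fun t => f t ξ = q', diracVec (X t ξ)) - q'‖ :=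
      Finset.single_le_sum (f := fun q' =>
        ((((Finset.range T).filter fun t => f t ξ = q').card : ℝ) / T) *
            ‖((((Finset.range T).filter fun t => f t ξ = q').card : ℝ)⁻¹ •
                ∑ t ∈ (Finset.range T).filter fun t => f t ξ = q', diracVec (X t ξ)) - q'‖)
        (fun q' _ =>
        mul_nonneg (div_nonneg (Nat.cast_nonneg _) (Nat.cast_nonneg _)) (norm_nonneg _)) hq
    linarith
  refine le_of_forall_pos_le_add fun η hη => ?_
  have hBc : IsBoundedUnder (· ≤ ·) atTop (fun T : ℕ => ∑ q' ∈ F,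
      ((((Finset.range T).filter fun t => f t ξ = q').card : ℝ) / T) *
        ‖((((Finset.range T).filter fun t => f t ξ = q').card : ℝ)⁻¹ •
            ∑ t ∈ (Finset.range T).filter fun t => f t ξ = q', diracVec (X t ξ)) - q'‖) :=
    isBoundedUnder_of ⟨∑ q' ∈ F, (1 + ‖q'‖), fun T => Finset.sum_le_sum fun q' _ =>
      aux_term_bd q' (fun t => X t ξ) _ T (Finset.filter_subset _ _)⟩
  have hev1 := eventually_lt_of_limsup_lt (lt_of_le_of_lt hcalξ
    (show ε < ε + η / 2 by linarith)) hBc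
  have hev2 : ∀ᶠ T : ℕ in atTop, ‖(T : ℝ)⁻¹ •
      ∑ t ∈ (Finset.range T).filter (fun t => f t ξ = q),
        ((diracVec (X t ξ) : EuclideanSpace ℝ Ω) - p)‖ < η / 2 :=
    hg0.eventually_lt_const (by linarith)
  have hev : ∀ᶠ T : ℕ in atTop,
      ((((Finset.range T).filter fun t => f t ξ = q).card : ℝ) / T) * ‖q - p‖ ≤ ε + η := by
    filter_upwards [hev1, hev2] with T h1 h2
    linarith [hpt T]
  exact limsup_le_of_le (isCoboundedUnder_le_of_eventually_le atTop
    (Eventually.of_forall fun T => mul_nonneg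
      (div_nonneg (Nat.cast_nonneg _) (Nat.cast_nonneg _)) (norm_nonneg _))) hev


end
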